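/- Let (d_{π₁(k)},...,d_{π₁(0)})_b and (d_{π₂(k)},...,d_{π₂(0)})_b be (n,b,τ₁)- and (n,b,τ₂)-permutiples with carries c and ĉ respectively. If ĉ_j = c_{π₁^{-1}π₂(j)} for all j, then n·d_{π₁τ₁π₁^{-1}(j)} ≡ n·d_{π₂τ₂π₂^{-1}(j)} (mod b) for all 0 ≤ j ≤ k. -/

import Mathlib

/-- Theorem: if two permutiples on the same digit set have carries related by
c'_j = c_{π₁⁻¹π₂(j)}, then n·d_{π₁τ₁π₁⁻¹(j)} ≡ n·d_{π₂τ₂π₂⁻¹(j)} (mod b). -/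
theorem stmt_14 (n b k : ℕ) (hn : 1 < n) (hnb : n < b)
    (τ₁ τ₂ π₁ π₂ : Equiv.Perm (Fin (k + 1)))
    (d : Fin (k + 1) → ℕ) (hd : ∀ j, d j < b)
    (c c' : Fin (k + 1) → ℕ)
    (hc0 : c 0 = 0) (hcb : ∀ j, c j ≤ n - 1)
    (hc'0 : c' 0 = 0) (hc'b : ∀ j, c' j ≤ n - 1)
    (hrel₁ : ∀ j : Fin (k + 1),
      (b : ℤ) * c (j + 1) - c j = n * d (π₁ (τ₁ j)) - d (π₁ j))
    (hrel₂ : ∀ j : Fin (k + 1),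
      (b : ℤ) * c' (j + 1) - c' j = n * d (π₂ (τ₂ j)) - d (π₂ j))
    (hcar : ∀ j : Fin (k + 1), c' j = c ((π₁⁻¹ * π₂) j)) :
    ∀ j : Fin (k + 1),
      ((n : ℤ) * d ((π₁ * τ₁ * π₁⁻¹) j))
        ≡ (n : ℤ) * d ((π₂ * τ₂ * π₂⁻¹) j) [ZMOD b] := by
  intro j
  have h1 := hrel₁ (π₁⁻¹ j)
  have h2 := hrel₂ (π₂⁻¹ j)
  have h3 := hcar (π₂⁻¹ j)
  simp only [fun (f : Equiv.Perm (Fin (k + 1))) x => (Equiv.Perm.eq_inv_iff_eq (f := f) (x := f⁻¹ x)).mp rfl, Equiv.Perm.mul_apply] at h1 h2 h3 ⊢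
  have key : ((n : ℤ) * d (π₁ (τ₁ (π₁⁻¹ j)))) - (n : ℤ) * d (π₂ (τ₂ (π₂⁻¹ j)))
      = (b : ℤ) * (c (π₁⁻¹ j + 1) - c' (π₂⁻¹ j + 1)) := by
    rw [h3] at h2
    linarith [h1, h2]
  exact (Int.modEq_iff_dvd.mpr ⟨_, key⟩).symm
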